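/- arXiv:1304.1588 — 3 statements merged into one kernel-verified Lean document; each statement's English description precedes it below -/
import Mathlib

section
/- Assume κ_1 μ_1 + κ_2 μ_2 = κ_3 conj(μ_3) with κ_1, κ_2, κ_3 > 0, and let A = diag(κ_1, κ_2, κ_3). Then for all z ∈ ℂ³, ⟨F(z), Az⟩_{ℂ³} = Σ_{j=1}^{3} κ_j λ_j |z_j|³ + 2κ_3 Re( conj(μ_3 z_1 z_2) z_3 ); in particular Im⟨F(z), Az⟩_{ℂ³} = Σ_{j=1}^{3} κ_j (Im λ_j) |z_j|³, which is ≤ 0 for all z ∈ ℂ³ whenever Im λ_j ≤ 0 for j = 1,2,3. -/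
open MeasureTheory Filter Complex

noncomputable section

/-- The underlying space `ℝ²`. -/
abbrev V2 : Type := EuclideanSpace ℝ (Fin 2)

/-- Fourier transform on `ℝ²` with the normalization `f̂(ξ) = (2π)⁻¹ ∫ e^{-iy·ξ} f(y) dy`. -/
def FT (f : V2 → ℂ) (ξ : V2) : ℂ :=
  (2 * Real.pi : ℂ)⁻¹ * ∫ y : V2, Complex.exp (-Complex.I * ((inner ℝ y ξ : ℝ) : ℂ)) * f y

/-- Inverse Fourier transform on `ℝ²`. -/
def FTinv (f : V2 → ℂ) (x : V2) : ℂ :=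
  (2 * Real.pi : ℂ)⁻¹ * ∫ ξ : V2, Complex.exp (Complex.I * ((inner ℝ x ξ : ℝ) : ℂ)) * f ξ

/-- The `L²(ℝ²)` norm. -/
def L2N (f : V2 → ℂ) : ℝ := (eLpNorm f 2 volume).toReal

/-- The `L³(ℝ²)` norm. -/
def L3N (f : V2 → ℂ) : ℝ := (eLpNorm f 3 volume).toReal

/-- The `L^∞(ℝ²)` norm of a `ℂ³`-valued function. -/
def LinfN (f : V2 → Fin 3 → ℂ) : ℝ := (eLpNorm f ⊤ volume).toReal

/-- The function `ξ ↦ (1+|ξ|²)^{s/2} f̂(ξ)`, i.e. the Fourier side of `(1-Δ)^{s/2} f`. -/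
def sobFn (s : ℝ) (f : V2 → ℂ) : V2 → ℂ :=
  fun ξ => (((1 + ‖ξ‖ ^ 2) ^ (s / 2) : ℝ) : ℂ) * FT f ξ

/-- The function `x ↦ (1+|x|²)^{s/2} f(x)`. -/
def wFn (s : ℝ) (f : V2 → ℂ) : V2 → ℂ :=
  fun x => (((1 + ‖x‖ ^ 2) ^ (s / 2) : ℝ) : ℂ) * f x

/-- The `H^{s,0}(ℝ²)` norm (via the Fourier transform). -/
def sobNorm (s : ℝ) (f : V2 → ℂ) : ℝ := L2N (sobFn s f)

/-- The `H^{0,s}(ℝ²)` norm. -/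
def wNorm (s : ℝ) (f : V2 → ℂ) : ℝ := L2N (wFn s f)

/-- Membership in `H^{s,0}(ℝ²)`. -/
def MemSob (s : ℝ) (f : V2 → ℂ) : Prop := MemLp (sobFn s f) 2 volume

/-- Membership in `H^{0,s}(ℝ²)`. -/
def MemW (s : ℝ) (f : V2 → ℂ) : Prop := MemLp (wFn s f) 2 volume

/-- Componentwise `H^{s,0}` norm of a `ℂ³`-valued function. -/
def sobNormS (s : ℝ) (f : V2 → Fin 3 → ℂ) : ℝ := ∑ j, sobNorm s (fun x => f x j)

/-- Componentwise `H^{0,s}` norm of a `ℂ³`-valued function. -/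
def wNormS (s : ℝ) (f : V2 → Fin 3 → ℂ) : ℝ := ∑ j, wNorm s (fun x => f x j)

/-- Componentwise membership in `H^{s,0}`. -/
def MemSobS (s : ℝ) (f : V2 → Fin 3 → ℂ) : Prop := ∀ j, MemSob s (fun x => f x j)

/-- Componentwise membership in `H^{0,s}`. -/
def MemWS (s : ℝ) (f : V2 → Fin 3 → ℂ) : Prop := ∀ j, MemW s (fun x => f x j)

/-- The norm `‖f‖_{H^{s,0}} + ‖f‖_{H^{0,s}}`. -/
def HN (s : ℝ) (f : V2 → Fin 3 → ℂ) : ℝ := sobNormS s f + wNormS s f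

/-- The quadratic nonlinearity `F : ℂ³ → ℂ³` of the system. -/
def Fnl (l μ : Fin 3 → ℂ) (z : Fin 3 → ℂ) : Fin 3 → ℂ :=
  ![l 0 * (‖z 0‖ : ℂ) * z 0 + μ 0 * (starRingEnd ℂ) (z 1) * z 2,
    l 1 * (‖z 1‖ : ℂ) * z 1 + μ 1 * (starRingEnd ℂ) (z 0) * z 2,
    l 2 * (‖z 2‖ : ℂ) * z 2 + μ 2 * z 0 * z 1]

/-- The standard Hermitian inner product `⟨z,w⟩ = Σ z_j conj(w_j)` on `ℂ³`. -/
def innC3 (z w : Fin 3 → ℂ) : ℂ := ∑ j, z j * (starRingEnd ℂ) (w j)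

/-- Multiplication by the diagonal matrix `A = diag(κ₁,κ₂,κ₃)`. -/
def Amul (κ : Fin 3 → ℝ) (z : Fin 3 → ℂ) : Fin 3 → ℂ := fun j => (κ j : ℂ) * z j

/-- `ν_A(z) = sqrt(κ₁|z₁|² + κ₂|z₂|² + κ₃|z₃|²)`. -/
def nuA (κ : Fin 3 → ℝ) (z : Fin 3 → ℂ) : ℝ :=
  Real.sqrt (∑ j, κ j * ‖z j‖ ^ 2)

/-- The free propagator `exp(i t Δ/(2m))` (as a Fourier multiplier). -/
def prop1 (mass t : ℝ) (f : V2 → ℂ) : V2 → ℂ :=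
  FTinv fun ξ =>
    Complex.exp (-Complex.I * (t : ℂ) * ((‖ξ‖ ^ 2 : ℝ) : ℂ) / (2 * (mass : ℂ))) * FT f ξ

/-- The free propagator `U(t) = (exp(itΔ/(2m_j)))_{j=1,2,3}` for the system. -/
def Uprop (m : Fin 3 → ℝ) (t : ℝ) (f : V2 → Fin 3 → ℂ) : V2 → Fin 3 → ℂ :=
  fun x j => prop1 (m j) t (fun y => f y j) x

/-- The operator `(Gφ)(ξ) = (−i m_j φ̂_j(m_j ξ))_{j=1,2,3}`. -/
def Gop (m : Fin 3 → ℝ) (f : V2 → Fin 3 → ℂ) : V2 → Fin 3 → ℂ :=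
  fun ξ j => -Complex.I * ((m j : ℝ) : ℂ) * FT (fun y => f y j) ((m j) • ξ)

/-- The Laplacian on `ℝ²`. -/
def lap (f : V2 → ℂ) (x : V2) : ℂ :=
  ∑ i : Fin 2,
    iteratedFDeriv ℝ 2 f x ![EuclideanSpace.single i (1 : ℝ), EuclideanSpace.single i 1]

/-- `u` satisfies the system `i ∂_t u_j + (1/(2m_j)) Δ u_j = F_j(u)` at time `t`. -/
def SolEq (m : Fin 3 → ℝ) (l μ : Fin 3 → ℂ) (u : ℝ → V2 → Fin 3 → ℂ) (t : ℝ) : Prop :=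
  ∀ x : V2, ∀ j : Fin 3,
    Complex.I * deriv (fun τ => u τ x j) t
        + (1 / (2 * ((m j : ℝ) : ℂ))) * lap (fun y => u t y j) x
      = Fnl l μ (u t x) j

/-- `u` is a solution of the initial value problem on `[0,T]`, belonging to
`C([0,T]; H^{s,0} ∩ H^{0,s})`. -/
def IsSolOn (m : Fin 3 → ℝ) (l μ : Fin 3 → ℂ) (s : ℝ) (φ : V2 → Fin 3 → ℂ)
    (T : ℝ) (u : ℝ → V2 → Fin 3 → ℂ) : Prop :=
  (∀ x, u 0 x = φ x) ∧
  (∀ t ∈ Set.Icc (0 : ℝ) T, MemSobS s (u t) ∧ MemWS s (u t)) ∧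
  (∀ t₀ ∈ Set.Icc (0 : ℝ) T,
    Filter.Tendsto (fun t => HN s fun x j => u t x j - u t₀ x j)
      (nhdsWithin t₀ (Set.Icc 0 T)) (nhds 0)) ∧
  (∀ t ∈ Set.Ioo (0 : ℝ) T, SolEq m l μ u t)

/-- `u` is a global solution of the initial value problem, belonging to
`C([0,∞); H^{s,0} ∩ H^{0,s})`. -/
def IsGlobalSol (m : Fin 3 → ℝ) (l μ : Fin 3 → ℂ) (s : ℝ) (φ : V2 → Fin 3 → ℂ)
    (u : ℝ → V2 → Fin 3 → ℂ) : Prop :=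
  (∀ x, u 0 x = φ x) ∧
  (∀ t ∈ Set.Ici (0 : ℝ), MemSobS s (u t) ∧ MemWS s (u t)) ∧
  (∀ t₀ ∈ Set.Ici (0 : ℝ),
    Filter.Tendsto (fun t => HN s fun x j => u t x j - u t₀ x j)
      (nhdsWithin t₀ (Set.Ici 0)) (nhds 0)) ∧
  (∀ t ∈ Set.Ioi (0 : ℝ), SolEq m l μ u t)

/-- The norm `‖u‖_{X_T}`. -/
def XTnorm (m : Fin 3 → ℝ) (s γ T : ℝ) (u : ℝ → V2 → Fin 3 → ℂ) : ℝ :=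
  ⨆ t : Set.Icc (0 : ℝ) T,
    ((1 + (t : ℝ)) * LinfN (u (t : ℝ)) +
      (1 + (t : ℝ)) ^ (-(γ / 3)) *
        (sobNormS s (u (t : ℝ)) + wNormS s (Uprop m (-(t : ℝ)) (u (t : ℝ)))))

/-- `E_θ z = (e^{i m_j θ} z_j)_{j=1,2,3}`. -/
def Eop (m : Fin 3 → ℝ) (θ : ℝ) (z : Fin 3 → ℂ) : Fin 3 → ℂ :=
  fun j => Complex.exp (Complex.I * ((m j * θ : ℝ) : ℂ)) * z j

/-- `M(t)φ = (e^{i m_j |x|²/(2t)} φ_j)_{j=1,2,3}`. -/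
def Mop (m : Fin 3 → ℝ) (t : ℝ) (f : V2 → Fin 3 → ℂ) : V2 → Fin 3 → ℂ :=
  fun x j => Complex.exp (Complex.I * ((m j * ‖x‖ ^ 2 / (2 * t) : ℝ) : ℂ)) * f x j

/-- `(D(t)φ)(x) = t⁻¹ φ(x/t)`. -/
def Dop (t : ℝ) (f : V2 → Fin 3 → ℂ) : V2 → Fin 3 → ℂ :=
  fun x j => ((t : ℝ) : ℂ)⁻¹ * f (t⁻¹ • x) j

/-- The inverse `G⁻¹` of the operator `G`. -/
def Ginv (m : Fin 3 → ℝ) (f : V2 → Fin 3 → ℂ) : V2 → Fin 3 → ℂ :=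
  fun x j => FTinv (fun η => (Complex.I / ((m j : ℝ) : ℂ)) * f ((m j)⁻¹ • η) j) x

/-- `W(t) = G M(t) G⁻¹`. -/
def Wop (m : Fin 3 → ℝ) (t : ℝ) (f : V2 → Fin 3 → ℂ) : V2 → Fin 3 → ℂ :=
  Gop m (Mop m t (Ginv m f))

end
/-- the identity for `⟨F(z), Az⟩` and the sign of its imaginary part. -/
theorem inner_product_identity
    (l μ : Fin 3 → ℂ) (κ : Fin 3 → ℝ)
    (hl : ∀ j, l j ≠ 0) (hmu : ∀ j, μ j ≠ 0)
    (hκ : ∀ j, 0 < κ j)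
    (hcoef : (κ 0 : ℂ) * μ 0 + (κ 1 : ℂ) * μ 1 = (κ 2 : ℂ) * (starRingEnd ℂ) (μ 2)) :
    ∀ z : Fin 3 → ℂ,
      innC3 (Fnl l μ z) (Amul κ z)
          = (∑ j, (κ j : ℂ) * l j * ((‖z j‖ ^ 3 : ℝ) : ℂ))
            + 2 * (κ 2 : ℂ) * ((((starRingEnd ℂ) (μ 2 * z 0 * z 1) * z 2).re : ℝ) : ℂ) ∧
      (innC3 (Fnl l μ z) (Amul κ z)).im = ∑ j, κ j * (l j).im * ‖z j‖ ^ 3 ∧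
      ((∀ j, (l j).im ≤ 0) → (innC3 (Fnl l μ z) (Amul κ z)).im ≤ 0) := by
  intro z
  have habs : ∀ j, ((‖z j‖ ^ 3 : ℝ) : ℂ)
      = (‖z j‖ : ℂ) * (z j * (starRingEnd ℂ) (z j)) := by
    intro j
    rw [Complex.mul_conj']
    push_cast
    ring
  have key : innC3 (Fnl l μ z) (Amul κ z)
      = (∑ j, (κ j : ℂ) * l j * ((‖z j‖ ^ 3 : ℝ) : ℂ))
        + 2 * (κ 2 : ℂ) * ((((starRingEnd ℂ) (μ 2 * z 0 * z 1) * z 2).re : ℝ) : ℂ) := by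
    have hre : (2 : ℂ) * ((((starRingEnd ℂ) (μ 2 * z 0 * z 1) * z 2).re : ℝ) : ℂ)
        = (starRingEnd ℂ) (μ 2 * z 0 * z 1) * z 2
          + (starRingEnd ℂ) ((starRingEnd ℂ) (μ 2 * z 0 * z 1) * z 2) := by
      rw [Complex.add_conj]; push_cast; ring
    simp only [innC3, Fnl, Amul, Fin.sum_univ_three, Matrix.cons_val_zero,
      Matrix.cons_val_one, Matrix.head_cons, Matrix.cons_val_two, Matrix.tail_cons,
      habs]
    have h2 : (2:ℂ) * (κ 2 : ℂ) * ((((starRingEnd ℂ) (μ 2 * z 0 * z 1) * z 2).re : ℝ) : ℂ)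
        = (κ 2 : ℂ) * ((starRingEnd ℂ) (μ 2 * z 0 * z 1) * z 2
          + (starRingEnd ℂ) ((starRingEnd ℂ) (μ 2 * z 0 * z 1) * z 2)) := by
      rw [← hre]; ring
    rw [h2]
    simp only [map_mul, Complex.conj_conj, Complex.conj_ofReal]
    linear_combination ((starRingEnd ℂ) (z 0) * (starRingEnd ℂ) (z 1) * z 2) * hcoef
  have him : (innC3 (Fnl l μ z) (Amul κ z)).im
      = ∑ j, κ j * (l j).im * ‖z j‖ ^ 3 := by
    rw [key]
    simp [Fin.sum_univ_three, Complex.add_im, Complex.mul_im, ← Complex.ofReal_pow]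
  refine ⟨key, him, fun hneg => ?_⟩
  rw [him]
  apply Finset.sum_nonpos
  intro j _
  have : κ j * (l j).im ≤ 0 :=
    mul_nonpos_of_nonneg_of_nonpos (hκ j).le (hneg j)
  exact mul_nonpos_of_nonpos_of_nonneg this (by positivity)
end

section
/- Let γ ∈ [0,1] and s > 1 + 2γ. There exists a constant C such that ‖G (M(t) − 1) ψ‖_{L^∞} ≤ C t^{−γ} ‖ψ‖_{H^{0,s}} for all t ≥ 1 and all ℂ³-valued ψ ∈ H^{0,s}(ℝ²), where M(t)ψ = (e^{i m_j |x|²/(2t)} ψ_j)_{j=1,2,3}. -/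
open MeasureTheory Filter Complex

section Helpers

private lemma min_one_le_rpow {a γ : ℝ} (ha : 0 ≤ a) (h0 : 0 ≤ γ) (h1 : γ ≤ 1) :
    min 1 a ≤ a ^ γ := by
  rcases le_or_gt a 1 with h | h
  · rcases eq_or_lt_of_le ha with h0a | h0a
    · rw [min_eq_right h, ← h0a]
      exact Real.rpow_nonneg le_rfl γ
    · rw [min_eq_right h]
      calc a = a ^ (1 : ℝ) := (Real.rpow_one a).symm
        _ ≤ a ^ γ := Real.rpow_le_rpow_of_exponent_ge h0a h h1
  · rw [min_eq_left h.le]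
    calc (1 : ℝ) = a ^ (0 : ℝ) := (Real.rpow_zero a).symm
      _ ≤ a ^ γ := Real.rpow_le_rpow_of_exponent_le h.le h0

private lemma norm_exp_I_mul_sub_one_le (θ : ℝ) :
    ‖Complex.exp (Complex.I * (θ : ℂ)) - 1‖ ≤ 2 * min 1 |θ| := by
  rcases le_or_gt |θ| 1 with h | h
  · rw [min_eq_right h]
    have habs : ‖Complex.I * (θ : ℂ)‖ = |θ| := by simp
    have h2 := Complex.norm_exp_sub_one_le (x := Complex.I * (θ : ℂ)) (by rw [habs]; exact h)
    rw [habs] at h2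
    exact h2
  · have h1 : ‖Complex.exp (Complex.I * (θ : ℂ))‖ = 1 := by
      simp [Complex.norm_exp]
    calc ‖Complex.exp (Complex.I * (θ : ℂ)) - 1‖
        ≤ ‖Complex.exp (Complex.I * (θ : ℂ))‖ + ‖(1 : ℂ)‖ := norm_sub_le _ _
      _ = 2 * 1 := by rw [h1]; norm_num
      _ = 2 * min 1 |θ| := by rw [min_eq_left h.le]


private lemma memL2_weight {γ s : ℝ} (hγ0 : 0 ≤ γ) (hs : 1 + 2 * γ < s) :
    MemLp (fun y : V2 => ((1 : ℝ) + ‖y‖ ^ 2) ^ (γ - s / 2)) 2 volume := by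
  have hc : Continuous fun y : V2 => ((1 : ℝ) + ‖y‖ ^ 2) ^ (γ - s / 2) := by
    apply Continuous.rpow_const (by continuity)
    intro y; left; positivity
  rw [memLp_two_iff_integrable_sq hc.aestronglyMeasurable]
  have hnr : (Module.finrank ℝ V2 : ℝ) < 2 * s - 4 * γ := by
    rw [finrank_euclideanSpace_fin]
    push_cast
    linarith
  have h := integrable_rpow_neg_one_add_norm_sq (E := V2) (μ := volume) hnr
  apply h.congr
  refine Filter.Eventually.of_forall fun y => ?_
  have hb : (0 : ℝ) < 1 + ‖y‖ ^ 2 := by positivity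
  have he : -(2 * s - 4 * γ) / 2 = (γ - s / 2) * 2 := by ring
  show ((1 : ℝ) + ‖y‖ ^ 2) ^ (-(2 * s - 4 * γ) / 2) = (((1 : ℝ) + ‖y‖ ^ 2) ^ (γ - s / 2)) ^ 2
  rw [he, Real.rpow_mul hb.le, show ((2 : ℝ)) = ((2 : ℕ) : ℝ) by norm_num, Real.rpow_natCast]

private lemma norm_FT_le (f : V2 → ℂ) (ξ : V2) :
    ‖FT f ξ‖ ≤ (2 * Real.pi)⁻¹ * ∫ y : V2, ‖f y‖ := by
  have hpi : ‖((2 * Real.pi : ℂ))⁻¹‖ = (2 * Real.pi)⁻¹ := by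
    rw [norm_inv]
    congr 1
    simp [Complex.norm_real,
      _root_.abs_of_pos Real.pi_pos]
  calc ‖FT f ξ‖
      = ‖((2 * Real.pi : ℂ))⁻¹‖ *
        ‖∫ y : V2, Complex.exp (-Complex.I * ((inner ℝ y ξ : ℝ) : ℂ)) * f y‖ := by
        rw [FT, norm_mul]
    _ ≤ (2 * Real.pi)⁻¹ *
        ∫ y : V2, ‖Complex.exp (-Complex.I * ((inner ℝ y ξ : ℝ) : ℂ)) * f y‖ := by
        rw [hpi]
        exact mul_le_mul_of_nonneg_left (norm_integral_le_integral_norm _) (by positivity)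
    _ = (2 * Real.pi)⁻¹ * ∫ y : V2, ‖f y‖ := by
        congr 1
        have hfun : (fun y : V2 => ‖Complex.exp (-Complex.I * ((inner ℝ y ξ : ℝ) : ℂ)) * f y‖)
            = fun y : V2 => ‖f y‖ := by
          funext y
          rw [norm_mul]
          simp [Complex.norm_exp]
        rw [hfun]

end Helpers

/-- `‖G(M(t) − 1)ψ‖_{L^∞} ≤ C t^{−γ} ‖ψ‖_{H^{0,s}}`. -/
theorem GM_minus_one_estimate
    (m : Fin 3 → ℝ) (hm : ∀ j, m j ≠ 0)
    (γ s : ℝ) (hγ0 : 0 ≤ γ) (hγ1 : γ ≤ 1) (hs : 1 + 2 * γ < s) :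
    ∃ C : ℝ, ∀ t : ℝ, 1 ≤ t → ∀ ψ : V2 → Fin 3 → ℂ, MemWS s ψ →
      LinfN (Gop m (fun x j => Mop m t ψ x j - ψ x j))
        ≤ C * t ^ (-γ) * wNormS s ψ := by
  classical
  have hw1mem : MemLp (fun y : V2 => ((1 : ℝ) + ‖y‖ ^ 2) ^ (γ - s / 2)) 2 volume :=
    memL2_weight hγ0 hs
  set w1 : V2 → ℝ := fun y => ((1 : ℝ) + ‖y‖ ^ 2) ^ (γ - s / 2) with hw1def
  have hw1nn : ∀ y : V2, 0 ≤ w1 y := fun y => by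
    simp only [hw1def]; positivity
  set C0 : ℝ := (eLpNorm w1 2 volume).toReal with hC0
  have hC0nn : 0 ≤ C0 := ENNReal.toReal_nonneg
  set A : Fin 3 → ℝ := fun j => (2 * Real.pi)⁻¹ * |m j| * (2 * (|m j| / 2) ^ γ) * C0 with hA
  have hAnn : ∀ j, 0 ≤ A j := fun j => by
    simp only [hA]; positivity
  refine ⟨∑ j, A j, ?_⟩
  intro t ht ψ hψ
  have ht0 : (0 : ℝ) < t := lt_of_lt_of_le one_pos ht
  have htγ : 0 ≤ t ^ (-γ) := Real.rpow_nonneg ht0.le _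
  have hwNormnn : ∀ j, 0 ≤ wNorm s (fun x => ψ x j) := fun j => ENNReal.toReal_nonneg
  have hwS : 0 ≤ wNormS s ψ := Finset.sum_nonneg fun j _ => hwNormnn j
  have hCnn : 0 ≤ ∑ j, A j := Finset.sum_nonneg fun j _ => hAnn j
  set B : ℝ := (∑ j, A j) * t ^ (-γ) * wNormS s ψ with hB
  have hBnn : 0 ≤ B := by
    rw [hB]; exact mul_nonneg (mul_nonneg hCnn htγ) hwS
  have key : ∀ ξ : V2, ‖Gop m (fun x j => Mop m t ψ x j - ψ x j) ξ‖ ≤ B := by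
    intro ξ
    rw [pi_norm_le_iff_of_nonneg hBnn]
    intro j
    set ψj : V2 → ℂ := fun y => ψ y j with hψjdef
    set gj : V2 → ℂ := fun y => Mop m t ψ y j - ψ y j with hgjdef
    have hψjL2 : MemLp (wFn s ψj) 2 volume := hψ j
    have hwfn_norm : ∀ y : V2, ‖wFn s ψj y‖ = ((1 : ℝ) + ‖y‖ ^ 2) ^ (s / 2) * ‖ψj y‖ := by
      intro y
      simp only [wFn, norm_mul, Complex.norm_real, Real.norm_eq_abs]
      rw [_root_.abs_of_pos (by positivity)]
    set c1 : ℝ := 2 * (|m j| / 2) ^ γ * t ^ (-γ) with hc1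
    have hc1nn : 0 ≤ c1 := by
      rw [hc1]; positivity
    have hgb : ∀ y : V2, ‖gj y‖ ≤ c1 * (w1 y * ‖wFn s ψj y‖) := by
      intro y
      set θ : ℝ := m j * ‖y‖ ^ 2 / (2 * t) with hθdef
      have hθeq : gj y = (Complex.exp (Complex.I * (θ : ℂ)) - 1) * ψj y := by
        simp only [hgjdef, hψjdef, Mop, hθdef]
        ring
      have habs : |θ| = |m j| / 2 * (‖y‖ ^ 2 * t⁻¹) := by
        rw [hθdef, abs_div, abs_mul, _root_.abs_of_nonneg (by positivity : (0 : ℝ) ≤ ‖y‖ ^ 2),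
          _root_.abs_of_pos (by positivity : (0 : ℝ) < 2 * t)]
        field_simp
      have hb0 : (0 : ℝ) < 1 + ‖y‖ ^ 2 := by positivity
      calc ‖gj y‖ = ‖Complex.exp (Complex.I * (θ : ℂ)) - 1‖ * ‖ψj y‖ := by
            rw [hθeq, norm_mul]
        _ ≤ (2 * min 1 |θ|) * ‖ψj y‖ :=
            mul_le_mul_of_nonneg_right (norm_exp_I_mul_sub_one_le θ) (norm_nonneg _)
        _ ≤ (2 * |θ| ^ γ) * ‖ψj y‖ := by
            refine mul_le_mul_of_nonneg_right ?_ (norm_nonneg _)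
            exact mul_le_mul_of_nonneg_left (min_one_le_rpow (abs_nonneg θ) hγ0 hγ1)
              (by norm_num)
        _ = (2 * ((|m j| / 2) ^ γ * ((‖y‖ ^ 2) ^ γ * (t⁻¹) ^ γ))) * ‖ψj y‖ := by
            rw [habs, Real.mul_rpow (by positivity) (by positivity),
              Real.mul_rpow (by positivity) (by positivity)]
        _ ≤ (2 * ((|m j| / 2) ^ γ * ((1 + ‖y‖ ^ 2) ^ γ * (t⁻¹) ^ γ))) * ‖ψj y‖ := by
            refine mul_le_mul_of_nonneg_right ?_ (norm_nonneg _)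
            refine mul_le_mul_of_nonneg_left ?_ (by norm_num)
            refine mul_le_mul_of_nonneg_left ?_ (by positivity)
            refine mul_le_mul_of_nonneg_right ?_ (by positivity)
            exact Real.rpow_le_rpow (by positivity) (by linarith) hγ0
        _ = c1 * (w1 y * ‖wFn s ψj y‖) := by
            rw [hwfn_norm y, hc1]
            simp only [hw1def]
            rw [Real.inv_rpow ht0.le, ← Real.rpow_neg ht0.le,
              show ((1 : ℝ) + ‖y‖ ^ 2) ^ γ
                  = ((1 : ℝ) + ‖y‖ ^ 2) ^ (γ - s / 2) * ((1 : ℝ) + ‖y‖ ^ 2) ^ (s / 2) by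
                rw [← Real.rpow_add hb0]; ring_nf]
            ring
    have hInt : Integrable (fun y => w1 y * ‖wFn s ψj y‖) volume := by
      have h2 : MemLp (fun y => ‖wFn s ψj y‖) 2 volume := hψjL2.norm
      have h3 : MemLp (w1 • fun y => ‖wFn s ψj y‖) 1 volume :=
        h2.smul hw1mem
      exact (memLp_one_iff_integrable.mp h3).congr
        (Filter.Eventually.of_forall fun y => by simp [smul_eq_mul])
    have hI2 : (∫ y : V2, w1 y * ‖wFn s ψj y‖) ≤ C0 * wNorm s ψj := by
      have hAESM : AEStronglyMeasurable (w1 • wFn s ψj) volume :=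
        hw1mem.aestronglyMeasurable.smul hψjL2.aestronglyMeasurable
      have heq : (fun y : V2 => w1 y * ‖wFn s ψj y‖) = fun y : V2 => ‖(w1 • wFn s ψj) y‖ := by
        funext y
        have : (w1 • wFn s ψj) y = w1 y • wFn s ψj y := rfl
        rw [this, norm_smul, Real.norm_eq_abs, _root_.abs_of_nonneg (hw1nn y)]
      rw [heq, integral_norm_eq_lintegral_enorm hAESM, ← eLpNorm_one_eq_lintegral_enorm]
      have hH : eLpNorm (w1 • wFn s ψj) 1 volume
          ≤ eLpNorm w1 2 volume * eLpNorm (wFn s ψj) 2 volume :=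
        eLpNorm_smul_le_mul_eLpNorm hψjL2.aestronglyMeasurable
          hw1mem.aestronglyMeasurable
      have hfin : eLpNorm w1 2 volume * eLpNorm (wFn s ψj) 2 volume ≠ ⊤ :=
        ENNReal.mul_ne_top hw1mem.eLpNorm_ne_top hψjL2.eLpNorm_ne_top
      calc (eLpNorm (w1 • wFn s ψj) 1 volume).toReal
          ≤ (eLpNorm w1 2 volume * eLpNorm (wFn s ψj) 2 volume).toReal :=
            ENNReal.toReal_mono hfin hH
        _ = C0 * wNorm s ψj := by rw [ENNReal.toReal_mul]; rfl
    have hIg : (∫ y : V2, ‖gj y‖) ≤ c1 * (C0 * wNorm s ψj) := by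
      calc (∫ y : V2, ‖gj y‖) ≤ ∫ y : V2, c1 * (w1 y * ‖wFn s ψj y‖) :=
            integral_mono_of_nonneg (Filter.Eventually.of_forall fun y => norm_nonneg _)
              (hInt.const_mul c1) (Filter.Eventually.of_forall hgb)
        _ = c1 * ∫ y : V2, w1 y * ‖wFn s ψj y‖ := integral_const_mul c1 _
        _ ≤ c1 * (C0 * wNorm s ψj) := mul_le_mul_of_nonneg_left hI2 hc1nn
    have hGeq : Gop m (fun x j => Mop m t ψ x j - ψ x j) ξ j
        = -Complex.I * ((m j : ℝ) : ℂ) * FT gj ((m j) • ξ) := rfl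
    have hnormI : ‖-Complex.I * ((m j : ℝ) : ℂ)‖ = |m j| := by
      rw [norm_mul, norm_neg, Complex.norm_I, one_mul, Complex.norm_real, Real.norm_eq_abs]
    calc ‖Gop m (fun x j => Mop m t ψ x j - ψ x j) ξ j‖
        = |m j| * ‖FT gj ((m j) • ξ)‖ := by rw [hGeq, norm_mul, hnormI]
      _ ≤ |m j| * ((2 * Real.pi)⁻¹ * ∫ y : V2, ‖gj y‖) :=
          mul_le_mul_of_nonneg_left (norm_FT_le gj _) (abs_nonneg _)
      _ ≤ |m j| * ((2 * Real.pi)⁻¹ * (c1 * (C0 * wNorm s ψj))) :=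
          mul_le_mul_of_nonneg_left
            (mul_le_mul_of_nonneg_left hIg (by positivity)) (abs_nonneg _)
      _ = A j * t ^ (-γ) * wNorm s ψj := by
          simp only [hA, hc1]
          ring
      _ ≤ B := by
          rw [hB]
          have h1 : A j ≤ ∑ i, A i := Finset.single_le_sum (fun i _ => hAnn i)
            (Finset.mem_univ j)
          have h2 : wNorm s ψj ≤ wNormS s ψ :=
            Finset.single_le_sum (f := fun i => wNorm s (fun x => ψ x i))
              (fun i _ => hwNormnn i) (Finset.mem_univ j)
          exact mul_le_mul (mul_le_mul_of_nonneg_right h1 htγ) h2 (hwNormnn j)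
            (mul_nonneg hCnn htγ)
  have h1 : eLpNorm (Gop m fun x j => Mop m t ψ x j - ψ x j) ⊤ volume
      ≤ ENNReal.ofReal B := by
    rw [eLpNorm_exponent_top]
    exact eLpNormEssSup_le_of_ae_bound (Filter.Eventually.of_forall key)
  calc LinfN (Gop m fun x j => Mop m t ψ x j - ψ x j)
      ≤ (ENNReal.ofReal B).toReal := ENNReal.toReal_mono ENNReal.ofReal_ne_top h1
    _ = B := ENNReal.toReal_ofReal hBnn
end

section
/- Let c > 0, K ≥ 0, a > 0, and let Φ : [2,∞) → [0,∞) be continuously differentiable and satisfy Φ'(t) ≤ −(2c/t) Φ(t)^{3/2} + K t^{−1−a} for all t ≥ 2. Then there exists a constant C (depending on c, K, a, and Φ(2)) such that Φ(t) ≤ C / (log t)² for all t ≥ 2. -/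
open MeasureTheory Filter Complex

/-- the ODE comparison lemma giving `Φ(t) ≤ C/(log t)²`. -/
theorem ode_log_decay
    (c K a : ℝ) (hc : 0 < c) (hK : 0 ≤ K) (ha : 0 < a)
    (Φ Φ' : ℝ → ℝ)
    (hΦ0 : ∀ t : ℝ, 2 ≤ t → 0 ≤ Φ t)
    (hderiv : ∀ t ∈ Set.Ici (2 : ℝ), HasDerivWithinAt Φ (Φ' t) (Set.Ici 2) t)
    (hcont : ContinuousOn Φ' (Set.Ici 2))
    (hineq : ∀ t : ℝ, 2 ≤ t →
      Φ' t ≤ -(2 * c / t) * Φ t ^ ((3 : ℝ) / 2) + K * t ^ (-1 - a)) :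
    ∃ C : ℝ, ∀ t : ℝ, 2 ≤ t → Φ t ≤ C / Real.log t ^ 2 := by
  set B : ℝ := 27 / (4 * c ^ 2) + 27 * K / a ^ 3 with hBdef
  set g : ℝ → ℝ := fun t => Real.log t ^ 3 * Φ t - B * Real.log t with hgdef
  have hgderiv : ∀ t ∈ Set.Ici (2:ℝ), HasDerivWithinAt g
      ((3 * Real.log t ^ 2 * t⁻¹) * Φ t + Real.log t ^ 3 * Φ' t - B * t⁻¹)
      (Set.Ici 2) t := by
    intro t ht
    have ht2 : (2:ℝ) ≤ t := ht
    have ht0 : t ≠ 0 := by intro h; rw [h] at ht2; norm_num at ht2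
    have hlog : HasDerivAt Real.log t⁻¹ t := Real.hasDerivAt_log ht0
    have h1 : HasDerivAt (fun s => Real.log s ^ 3) (3 * Real.log t ^ 2 * t⁻¹) t := by
      simpa using hlog.fun_pow 3
    exact (h1.hasDerivWithinAt.mul (hderiv t ht)).sub (hlog.const_mul B).hasDerivWithinAt
  have hcontg : ContinuousOn g (Set.Ici 2) :=
    fun t ht => (hgderiv t ht).continuousWithinAt
  -- nonpositivity of the derivative
  have hdnonpos : ∀ t : ℝ, 2 ≤ t →
      (3 * Real.log t ^ 2 * t⁻¹) * Φ t + Real.log t ^ 3 * Φ' t - B * t⁻¹ ≤ 0 := by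
    intro t ht
    have ht0 : (0:ℝ) < t := by linarith
    have htinv : (0:ℝ) < t⁻¹ := by positivity
    set L := Real.log t with hLdef
    have hL : 0 < L := Real.log_pos (by linarith)
    set x := Φ t with hxdef
    have hx0 : 0 ≤ x := hΦ0 t ht
    -- bound on log: L ≤ (3/a) * t^(a/3)
    have hLb : L ≤ (3 / a) * t ^ (a / 3) := by
      have h1 : Real.log (t ^ (a / 3)) ≤ t ^ (a / 3) := by
        have := Real.log_le_sub_one_of_pos (x := t ^ (a / 3)) (Real.rpow_pos_of_pos ht0 _)
        linarith
      rw [Real.log_rpow ht0] at h1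
      have ha3 : 0 < a / 3 := by linarith
      calc L = (3 / a) * (a / 3 * L) := by field_simp
        _ ≤ (3 / a) * t ^ (a / 3) := by
            apply mul_le_mul_of_nonneg_left h1 (by positivity)
    -- hence K * L^3 * t^(-1-a) ≤ (27*K/a^3) * t⁻¹
    have hbound1 : K * (L ^ 3 * t ^ (-1 - a)) ≤ (27 * K / a ^ 3) * t⁻¹ := by
      have hL3 : L ^ 3 ≤ (3 / a) ^ 3 * t ^ a := by
        have h2 : L ^ 3 ≤ ((3 / a) * t ^ (a / 3)) ^ 3 :=
          pow_le_pow_left₀ hL.le hLb 3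
        have h3 : ((3 / a) * t ^ (a / 3)) ^ 3 = (3 / a) ^ 3 * t ^ a := by
          rw [mul_pow, ← Real.rpow_natCast (t ^ (a / 3)) 3, ← Real.rpow_mul ht0.le]
          norm_num
        linarith
      have hta : (0:ℝ) < t ^ (-1 - a) := Real.rpow_pos_of_pos ht0 _
      have h4 : L ^ 3 * t ^ (-1 - a) ≤ (3 / a) ^ 3 * (t ^ a * t ^ (-1 - a)) := by
        have := mul_le_mul_of_nonneg_right hL3 hta.le
        linarith [this]
      have h5 : t ^ a * t ^ (-1 - a) = t⁻¹ := by
        rw [← Real.rpow_add ht0, show a + (-1 - a) = -1 by ring, Real.rpow_neg_one]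
      rw [h5] at h4
      calc K * (L ^ 3 * t ^ (-1 - a)) ≤ K * ((3 / a) ^ 3 * t⁻¹) :=
            mul_le_mul_of_nonneg_left h4 hK
        _ = (27 * K / a ^ 3) * t⁻¹ := by field_simp; ring
    -- key Young-type bound: 3 L² x - 2 c L³ x^{3/2} ≤ 27/(4c²)
    have hx32 : (0:ℝ) ≤ x ^ ((3:ℝ)/2) := Real.rpow_nonneg hx0 _
    have hbound2 : 3 * L ^ 2 * x - 2 * c * L ^ 3 * x ^ ((3:ℝ)/2) ≤ 27 / (4 * c ^ 2) := by
      rcases le_or_gt x (9 / (4 * c ^ 2 * L ^ 2)) with hcase | hcase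
      · have h1 : 3 * L ^ 2 * x ≤ 27 / (4 * c ^ 2) := by
          have := mul_le_mul_of_nonneg_left hcase (by positivity : (0:ℝ) ≤ 3 * L ^ 2)
          calc 3 * L ^ 2 * x ≤ 3 * L ^ 2 * (9 / (4 * c ^ 2 * L ^ 2)) := this
            _ = 27 / (4 * c ^ 2) := by field_simp; ring
        nlinarith [mul_nonneg (mul_nonneg (by positivity : (0:ℝ) ≤ 2 * c) (by positivity : (0:ℝ) ≤ L ^ 3)) hx32]
      · have hxpos : 0 < x := lt_trans (by positivity) hcase
        have hsq : (3 / (2 * c * L)) ^ 2 ≤ x := by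
          have : (3 / (2 * c * L)) ^ 2 = 9 / (4 * c ^ 2 * L ^ 2) := by
            field_simp; ring
          linarith
        have hhalf : 3 / (2 * c * L) ≤ x ^ ((1:ℝ)/2) := by
          have h1 : Real.sqrt ((3 / (2 * c * L)) ^ 2) ≤ Real.sqrt x := Real.sqrt_le_sqrt hsq
          rwa [Real.sqrt_sq (by positivity), Real.sqrt_eq_rpow] at h1
        have hsplit : x ^ ((3:ℝ)/2) = x * x ^ ((1:ℝ)/2) := by
          rw [show (3:ℝ)/2 = 1 + 1/2 by norm_num, Real.rpow_add hxpos, Real.rpow_one]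
        have h2 : 3 * L ^ 2 * x ≤ 2 * c * L ^ 3 * x ^ ((3:ℝ)/2) := by
          rw [hsplit]
          have := mul_le_mul_of_nonneg_left hhalf
            (by positivity : (0:ℝ) ≤ 2 * c * L ^ 3 * x)
          calc 3 * L ^ 2 * x = 2 * c * L ^ 3 * x * (3 / (2 * c * L)) := by
                field_simp
            _ ≤ 2 * c * L ^ 3 * x * x ^ ((1:ℝ)/2) := this
            _ = 2 * c * L ^ 3 * (x * x ^ ((1:ℝ)/2)) := by ring
        have : (0:ℝ) ≤ 27 / (4 * c ^ 2) := by positivity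
        linarith
    -- assemble
    have hΦ' := hineq t ht
    have hL3 : (0:ℝ) < L ^ 3 := by positivity
    have hmul : L ^ 3 * Φ' t ≤ L ^ 3 * (-(2 * c / t) * x ^ ((3:ℝ)/2) + K * t ^ (-1 - a)) :=
      mul_le_mul_of_nonneg_left hΦ' hL3.le
    have hB2 : (3 * L ^ 2 * x - 2 * c * L ^ 3 * x ^ ((3:ℝ)/2)) * t⁻¹ ≤ 27 / (4 * c ^ 2) * t⁻¹ :=
      mul_le_mul_of_nonneg_right hbound2 htinv.le
    have hB2' : 3 * (L ^ 2 * x * t⁻¹) - 2 * c * (L ^ 3 * x ^ ((3:ℝ)/2) * t⁻¹)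
        ≤ 27 / (4 * c ^ 2) * t⁻¹ := by
      have hr : (3 * L ^ 2 * x - 2 * c * L ^ 3 * x ^ ((3:ℝ)/2)) * t⁻¹
          = 3 * (L ^ 2 * x * t⁻¹) - 2 * c * (L ^ 3 * x ^ ((3:ℝ)/2) * t⁻¹) := by ring
      linarith [hB2, hr.ge, hr.le]
    have hmul2 : L ^ 3 * Φ' t ≤ -(2 * c * (L ^ 3 * x ^ ((3:ℝ)/2) * t⁻¹))
        + K * (L ^ 3 * t ^ (-1 - a)) := by
      have hr : L ^ 3 * (-(2 * c / t) * x ^ ((3:ℝ)/2) + K * t ^ (-1 - a))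
          = -(2 * c * (L ^ 3 * x ^ ((3:ℝ)/2) * t⁻¹)) + K * (L ^ 3 * t ^ (-1 - a)) := by
        field_simp
      linarith [hmul, hr.le]
    linarith [hmul2, hbound1, hB2', hBdef.le, hBdef.ge]
  have hanti : AntitoneOn g (Set.Ici 2) := by
    apply antitoneOn_of_deriv_nonpos (convex_Ici 2) hcontg
    · intro t ht
      rw [interior_Ici] at ht
      exact ((hgderiv t (Set.mem_Ici.mpr (le_of_lt ht))).hasDerivAt (Ici_mem_nhds ht)).differentiableAt.differentiableWithinAt
    · intro t ht
      rw [interior_Ici] at ht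
      rw [((hgderiv t (Set.mem_Ici.mpr (le_of_lt ht))).hasDerivAt (Ici_mem_nhds ht)).deriv]
      exact hdnonpos t ht.le
  refine ⟨|g 2| / Real.log 2 + B, fun t ht => ?_⟩
  have hgt : g t ≤ g 2 := hanti (by norm_num) ht ht
  set L := Real.log t with hLdef
  have hL2 : Real.log 2 ≤ L := Real.log_le_log (by norm_num) ht
  have hlog2 : (0:ℝ) < Real.log 2 := Real.log_pos (by norm_num)
  have hL : 0 < L := lt_of_lt_of_le hlog2 hL2
  set C := |g 2| / Real.log 2 + B with hCdef
  have h1 : L ^ 3 * Φ t ≤ |g 2| + B * L := by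
    have : g t = L ^ 3 * Φ t - B * L := rfl
    have habs : g 2 ≤ |g 2| := le_abs_self _
    linarith [hgt]
  have h2 : |g 2| ≤ |g 2| / Real.log 2 * L := by
    rw [div_mul_eq_mul_div, le_div_iff₀ hlog2]
    exact mul_le_mul_of_nonneg_left hL2 (abs_nonneg _)
  have h3 : L ^ 3 * Φ t ≤ C * L := by
    rw [hCdef]; nlinarith [h1, h2]
  rw [le_div_iff₀ (by positivity : (0:ℝ) < L ^ 2)]
  have hLpos : (0:ℝ) < L := hL
  refine le_of_mul_le_mul_right ?_ hLpos
  nlinarith [h3]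
end
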